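/- arXiv:2103.01356 — 4 statements merged into one kernel-verified Lean document; each statement's English description precedes it below -/
import Mathlib

section
/- The variance of the Monte-Carlo cross-validation intensity estimator is Var(θ̂) = (p/(k(1−p))) · (Σ_{x∈𝐱} h(x)²) / H²; in particular it tends to 0 as k → ∞ or as p → 0. -/
open MeasureTheory ProbabilityTheory

/-- The variance of the Monte-Carlo cross-validation intensity estimator is
`Var(θ̂) = (p/(k(1−p))) · (∑_{x∈xs} h(x)²) / H²`. -/
theorem mccv_intensity_estimator_variance {Ω : Type*} [MeasurableSpace Ω]
    (P : Measure Ω) [IsProbabilityMeasure P] {S : Type*} (xs : Finset S)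
    (h : S → ℝ) (H : ℝ) (hH : H ≠ 0) (p : ℝ) (hp : p ∈ Set.Ioo (0 : ℝ) 1)
    (k : ℕ) (hk : 1 ≤ k) (ε : Fin k × xs → Ω → ℝ)
    (hmeas : ∀ q, Measurable (ε q))
    (h01 : ∀ q ω, ε q ω = 0 ∨ ε q ω = 1)
    (hindep : iIndepFun ε P)
    (hprob : ∀ q, P {ω | ε q ω = 1} = ENNReal.ofReal (1 - p)) :
    variance (fun ω => (1 / (k : ℝ)) * ∑ i : Fin k,
        (∑ x : xs, h x * ε (i, x) ω) / ((1 - p) * H)) P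
      = (p / (k * (1 - p))) * (∑ x ∈ xs, (h x) ^ 2) / H ^ 2 := by
  obtain ⟨hp0, hp1⟩ := hp
  have hkR : (k : ℝ) ≠ 0 := Nat.cast_ne_zero.mpr (by omega)
  have h1p : (1 : ℝ) - p ≠ 0 := by linarith
  -- integral of each ε q is 1 - p
  have hint : ∀ q, ∫ ω, ε q ω ∂P = 1 - p := by
    intro q
    have hset : MeasurableSet {ω | ε q ω = 1} := (hmeas q) (measurableSet_singleton 1)
    have heq : ε q = Set.indicator {ω | ε q ω = 1} (fun _ => (1 : ℝ)) := by
      funext ω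
      rcases h01 q ω with h0 | h1
      · rw [h0, Set.indicator_of_notMem]
        simp only [Set.mem_setOf_eq, h0]
        norm_num
      · rw [h1, Set.indicator_of_mem]; exact h1
    rw [heq, integral_indicator_const _ hset, measureReal_def, hprob q,
      ENNReal.toReal_ofReal (by linarith), smul_eq_mul, mul_one]
  have hsq : ∀ q ω, ε q ω ^ 2 = ε q ω := by
    intro q ω; rcases h01 q ω with h' | h' <;> simp [h']
  have hmem : ∀ q, MemLp (ε q) 2 P := by
    intro q
    apply memLp_of_bounded (a := 0) (b := 1) _ (hmeas q).aestronglyMeasurable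
    filter_upwards with ω
    rcases h01 q ω with h' | h' <;> simp [h']
  -- variance of each ε q
  have hvar : ∀ q, variance (ε q) P = p * (1 - p) := by
    intro q
    rw [variance_eq_sub (hmem q)]
    have : ∫ ω, (ε q ^ 2) ω ∂P = 1 - p := by
      simp only [Pi.pow_apply, hsq]
      exact hint q
    rw [this, hint q]
    ring
  -- rewrite the estimator
  set c : ℝ := 1 / (k * ((1 - p) * H)) with hc
  have hrw : (fun ω => (1 / (k : ℝ)) * ∑ i : Fin k,
      (∑ x : xs, h x * ε (i, x) ω) / ((1 - p) * H))
      = fun ω => c * (∑ q : Fin k × xs, (fun q ω => h q.2 * ε q ω) q ω) := by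
    funext ω
    rw [Fintype.sum_prod_type]
    simp only [div_eq_mul_inv, one_mul, hc, mul_inv]
    rw [Finset.mul_sum, Finset.mul_sum]
    refine Finset.sum_congr rfl fun i _ => ?_
    rw [Finset.sum_mul, Finset.mul_sum, Finset.mul_sum]
    refine Finset.sum_congr rfl fun x _ => ?_
    ring
  rw [hrw]
  have hX : (fun ω => c * (∑ q : Fin k × xs, (fun q ω => h q.2 * ε q ω) q ω))
      = c • (∑ q : Fin k × xs, (fun ω => h q.2 * ε q ω)) := by
    funext ω; simp [Finset.sum_apply]
  rw [hX, variance_smul]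
  have hmem' : ∀ q : Fin k × xs, q ∈ (Finset.univ : Finset (Fin k × xs)) →
      MemLp (fun ω => h q.2 * ε q ω) 2 P := by
    intro q _
    exact ((hmem q).const_mul (h q.2))
  have hpair : Set.Pairwise ↑(Finset.univ : Finset (Fin k × xs))
      (fun i j => IndepFun (fun ω => h i.2 * ε i ω) (fun ω => h j.2 * ε j ω) P) := by
    intro i _ j _ hij
    exact (hindep.indepFun hij).comp (measurable_const_mul (h i.2))
      (measurable_const_mul (h j.2))
  rw [IndepFun.variance_sum hmem' hpair]
  have hterm : ∀ q : Fin k × xs, variance (fun ω => h q.2 * ε q ω) P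
      = (h q.2) ^ 2 * (p * (1 - p)) := by
    intro q
    have : (fun ω => h q.2 * ε q ω) = (h q.2) • (ε q) := by funext ω; simp
    rw [this, variance_smul, hvar q]
  simp only [hterm]
  rw [← Finset.sum_mul]
  have hsum : ∑ q : Fin k × xs, (h (q.2 : S)) ^ 2 = k * ∑ x ∈ xs, (h x) ^ 2 := by
    rw [Fintype.sum_prod_type]
    have hinner : ∀ i : Fin k, ∑ y : xs, h ((i, y).2 : S) ^ 2 = ∑ x ∈ xs, (h x) ^ 2 :=
      fun i => Finset.sum_attach xs (fun x => (h x) ^ 2)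
    simp only [hinner, Finset.sum_const, Finset.card_univ, Fintype.card_fin, nsmul_eq_mul]
    rw [Finset.univ_eq_attach, Finset.sum_attach xs (fun x => (h x) ^ 2)]
  rw [hsum, hc]
  field_simp
end

section
/- Prediction (swap) formula for independent thinning of a finite sample: let (X_1,…,X_N) be a random vector in S^N, let U_1,…,U_N be i.i.d. uniform random variables on [0,1] independent of (X_1,…,X_N), let p : S → [0,1] be measurable, and set B_i := 1{U_i ≤ p(X_i)}. Fix 1 ≤ n ≤ N and an injective map φ : {1,…,n} → {1,…,N}, and let G : S^N × {0,1}^N → [0,∞) be measurable and insensitive to the mark coordinates in the range of φ, i.e. G(x, b) = G(x, b′) whenever b_j = b′_j for every index j not in the range of φ. Then E[ ( ∏_{j=1}^n B_{φ(j)} ) · ( ∏_{j=1}^n (1 − p(X_{φ(j)})) ) · G(X, B) ] = E[ ( ∏_{j=1}^n (1 − B_{φ(j)}) ) · ( ∏_{j=1}^n p(X_{φ(j)}) ) · G(X, B) ]. -/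
open MeasureTheory ProbabilityTheory ENNReal

lemma lmarginal_prod_mul_aux {ι : Type*} [DecidableEq ι]
    (ν : ι → Measure ℝ) [∀ i, SigmaFinite (ν i)]
    (f : ι → ℝ → ℝ≥0∞) (hf : ∀ i, Measurable (f i)) (s : Finset ι) :
    ∀ (g : (ι → ℝ) → ℝ≥0∞), Measurable g →
      (∀ (u : ι → ℝ) (i : ι) (t : ℝ), i ∈ s → g (Function.update u i t) = g u) →
      (∫⋯∫⁻_s, (fun u => (∏ i ∈ s, f i (u i)) * g u) ∂ν)
        = fun u => (∏ i ∈ s, ∫⁻ t, f i t ∂ν i) * g u := by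
  induction s using Finset.induction_on with
  | empty => intro g hg hgs; simp
  | @insert a s ha ih =>
    intro g hg hgs
    have hFm : Measurable (fun u : ι → ℝ => (∏ i ∈ insert a s, f i (u i)) * g u) :=
      (Finset.measurable_prod _ fun i _ => (hf i).comp (measurable_pi_apply i)).mul hg
    rw [MeasureTheory.lmarginal_insert' _ hFm ha]
    have hstep : (fun u => ∫⁻ t, (∏ i ∈ insert a s, f i (Function.update u a t i))
          * g (Function.update u a t) ∂ν a)
        = fun u => (∏ i ∈ s, f i (u i)) * (g u * ∫⁻ t, f a t ∂ν a) := by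
      funext u
      have h1 : ∀ t, (∏ i ∈ insert a s, f i (Function.update u a t i))
          * g (Function.update u a t)
          = ((∏ i ∈ s, f i (u i)) * g u) * f a t := by
        intro t
        rw [Finset.prod_insert ha, Function.update_self,
          hgs _ _ _ (Finset.mem_insert_self a s)]
        have : ∀ i ∈ s, f i (Function.update u a t i) = f i (u i) := fun i hi => by
          rw [Function.update_of_ne (ne_of_mem_of_not_mem hi ha)]
        rw [Finset.prod_congr rfl this]; ring
      simp_rw [h1]
      rw [lintegral_const_mul _ (hf a)]; ring
    rw [hstep, ih (fun u => g u * ∫⁻ t, f a t ∂ν a) (hg.mul measurable_const)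
      (fun u i t hi => by rw [hgs _ _ _ (Finset.mem_insert_of_mem hi)])]
    funext u
    rw [Finset.prod_insert ha]; ring

lemma inner_swap_aux {ι : Type*} [Fintype ι] [DecidableEq ι]
    (ν : ι → Measure ℝ) [∀ i, SigmaFinite (ν i)] (s : Finset ι)
    (fL fR : ι → ℝ → ℝ≥0∞) (hfL : ∀ i, Measurable (fL i)) (hfR : ∀ i, Measurable (fR i))
    (g : (ι → ℝ) → ℝ≥0∞) (hg : Measurable g)
    (hginv : ∀ (u : ι → ℝ) (i : ι) (t : ℝ), i ∈ s → g (Function.update u i t) = g u)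
    (cL cR : ℝ≥0∞)
    (hswap : (∏ i ∈ s, ∫⁻ t, fL i t ∂ν i) * cL = (∏ i ∈ s, ∫⁻ t, fR i t ∂ν i) * cR) :
    ∫⁻ u, (∏ i ∈ s, fL i (u i)) * (cL * g u) ∂Measure.pi ν
      = ∫⁻ u, (∏ i ∈ s, fR i (u i)) * (cR * g u) ∂Measure.pi ν := by
  have hgL : Measurable fun u => cL * g u := measurable_const.mul hg
  have hgR : Measurable fun u => cR * g u := measurable_const.mul hg
  have hgLinv : ∀ (u : ι → ℝ) (i : ι) (t : ℝ), i ∈ s →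
      (fun u => cL * g u) (Function.update u i t) = (fun u => cL * g u) u :=
    fun u i t hi => by dsimp only; rw [hginv u i t hi]
  have hgRinv : ∀ (u : ι → ℝ) (i : ι) (t : ℝ), i ∈ s →
      (fun u => cR * g u) (Function.update u i t) = (fun u => cR * g u) u :=
    fun u i t hi => by dsimp only; rw [hginv u i t hi]
  refine MeasureTheory.lintegral_eq_of_lmarginal_eq s
    ((Finset.measurable_prod _ fun i _ => (hfL i).comp (measurable_pi_apply i)).mul hgL)
    ((Finset.measurable_prod _ fun i _ => (hfR i).comp (measurable_pi_apply i)).mul hgR) ?_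
  rw [lmarginal_prod_mul_aux ν fL hfL s _ hgL hgLinv,
    lmarginal_prod_mul_aux ν fR hfR s _ hgR hgRinv]
  funext u
  calc (∏ i ∈ s, ∫⁻ t, fL i t ∂ν i) * (cL * g u)
      = ((∏ i ∈ s, ∫⁻ t, fL i t ∂ν i) * cL) * g u := by ring
    _ = ((∏ i ∈ s, ∫⁻ t, fR i t ∂ν i) * cR) * g u := by rw [hswap]
    _ = (∏ i ∈ s, ∫⁻ t, fR i t ∂ν i) * (cR * g u) := by ring

/-- Prediction (swap) formula for independent thinning of a finite sample:
with a random vector `X : Ω → (Fin N → S)`, i.i.d. uniform marks `U 1,…,U N` independent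
of `X`, retention indicators `B i = 1{U i ≤ p(X i)}`, a fixed injective
`φ : Fin n ↪ Fin N`, and a non-negative measurable `G` that does not depend on the mark
coordinates in the range of `φ`,
`E[(∏_j B_{φ j})(∏_j (1 − p(X_{φ j}))) G(X,B)] = E[(∏_j (1 − B_{φ j}))(∏_j p(X_{φ j})) G(X,B)]`. -/
theorem thinning_prediction_swap_formula {Ω S : Type*} [MeasurableSpace Ω]
    [MeasurableSpace S] (P : Measure Ω) [IsProbabilityMeasure P]
    (N n : ℕ) (hn : 1 ≤ n) (hnN : n ≤ N)
    (X : Ω → Fin N → S) (hX : Measurable X)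
    (U : Fin N → Ω → ℝ) (hU : ∀ i, Measurable (U i))
    (hUiid : iIndepFun U P)
    (hUlaw : ∀ i, Measure.map (U i) P = volume.restrict (Set.Icc (0 : ℝ) 1))
    (hXUindep : IndepFun X (fun ω (i : Fin N) => U i ω) P)
    (p : S → ℝ) (hp : Measurable p) (hp01 : ∀ u, p u ∈ Set.Icc (0 : ℝ) 1)
    (φ : Fin n ↪ Fin N)
    (G : (Fin N → S) → (Fin N → Bool) → ℝ≥0∞)
    (hG : Measurable (fun q : (Fin N → S) × (Fin N → Bool) => G q.1 q.2))
    (hGins : ∀ x b b', (∀ j, j ∉ Set.range φ → b j = b' j) → G x b = G x b') :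
    ∫⁻ ω, (∏ j, (if U (φ j) ω ≤ p (X ω (φ j)) then (1 : ℝ≥0∞) else 0))
        * (∏ j, ENNReal.ofReal (1 - p (X ω (φ j))))
        * G (X ω) (fun i => decide (U i ω ≤ p (X ω i))) ∂P
      = ∫⁻ ω, (∏ j, (if U (φ j) ω ≤ p (X ω (φ j)) then (0 : ℝ≥0∞) else 1))
        * (∏ j, ENNReal.ofReal (p (X ω (φ j))))
        * G (X ω) (fun i => decide (U i ω ≤ p (X ω i))) ∂P := by
  classical
  set ν : Fin N → Measure ℝ := fun _ => volume.restrict (Set.Icc (0 : ℝ) 1) with hν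
  haveI : ∀ i, IsProbabilityMeasure (ν i) := fun i =>
    ⟨by simp [hν, Real.volume_Icc]⟩
  set U' : Ω → Fin N → ℝ := fun ω i => U i ω with hU'def
  have hU' : Measurable U' := measurable_pi_iff.mpr hU
  -- the joint law of the U's is the product of uniforms
  have hUpi : Measure.map U' P = Measure.pi ν := by
    symm
    refine Measure.pi_eq fun s hs => ?_
    rw [Measure.map_apply hU' (MeasurableSet.univ_pi hs)]
    have hpre : U' ⁻¹' Set.pi Set.univ s = ⋂ i ∈ Finset.univ, U i ⁻¹' s i := by
      ext ω; simp [Set.mem_pi, hU'def]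
    rw [hpre, hUiid.measure_inter_preimage_eq_mul Finset.univ (fun i _ => hs i)]
    refine Finset.prod_congr rfl fun i _ => ?_
    rw [← Measure.map_apply (hU i) (hs i), hUlaw i]
  have hpair : Measure.map (fun ω => (X ω, U' ω)) P
      = (Measure.map X P).prod (Measure.pi ν) := by
    rw [← hUpi]
    exact (indepFun_iff_map_prod_eq_prod_map_map hX.aemeasurable hU'.aemeasurable).1 hXUindep
  -- measurability of the two integrands as functions of (x, u)
  have hmemle : ∀ i : Fin N,
      MeasurableSet {q : (Fin N → S) × (Fin N → ℝ) | q.2 i ≤ p (q.1 i)} := fun i =>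
    measurableSet_le (measurable_snd.eval) (hp.comp (measurable_fst.eval))
  have hB : Measurable
      (fun q : (Fin N → S) × (Fin N → ℝ) => fun i => decide (q.2 i ≤ p (q.1 i))) := by
    rw [measurable_pi_iff]; intro i
    have h : (fun q : (Fin N → S) × (Fin N → ℝ) => decide (q.2 i ≤ p (q.1 i)))
        = fun q => if q.2 i ≤ p (q.1 i) then true else false := by
      funext q; by_cases h : q.2 i ≤ p (q.1 i) <;> simp [h]
    rw [h]
    exact Measurable.ite (hmemle i) measurable_const measurable_const
  have hΦL : Measurable (fun q : (Fin N → S) × (Fin N → ℝ) =>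
      (∏ j, (if q.2 (φ j) ≤ p (q.1 (φ j)) then (1 : ℝ≥0∞) else 0))
        * (∏ j, ENNReal.ofReal (1 - p (q.1 (φ j))))
        * G q.1 (fun i => decide (q.2 i ≤ p (q.1 i)))) := by
    refine Measurable.mul (Measurable.mul ?_ ?_) (hG.comp (measurable_fst.prodMk hB))
    · exact Finset.measurable_prod _ fun j _ =>
        Measurable.ite (hmemle (φ j)) measurable_const measurable_const
    · exact Finset.measurable_prod _ fun j _ =>
        ENNReal.measurable_ofReal.comp
          (measurable_const.sub (hp.comp (measurable_fst.eval)))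
  have hΦR : Measurable (fun q : (Fin N → S) × (Fin N → ℝ) =>
      (∏ j, (if q.2 (φ j) ≤ p (q.1 (φ j)) then (0 : ℝ≥0∞) else 1))
        * (∏ j, ENNReal.ofReal (p (q.1 (φ j))))
        * G q.1 (fun i => decide (q.2 i ≤ p (q.1 i)))) := by
    refine Measurable.mul (Measurable.mul ?_ ?_) (hG.comp (measurable_fst.prodMk hB))
    · exact Finset.measurable_prod _ fun j _ =>
        Measurable.ite (hmemle (φ j)) measurable_const measurable_const
    · exact Finset.measurable_prod _ fun j _ =>
        ENNReal.measurable_ofReal.comp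
          (hp.comp (measurable_fst.eval))
  -- reduction to the product measure
  have hred : ∀ (Φ : (Fin N → S) × (Fin N → ℝ) → ℝ≥0∞), Measurable Φ →
      ∫⁻ ω, Φ (X ω, U' ω) ∂P
        = ∫⁻ x, ∫⁻ u, Φ (x, u) ∂(Measure.pi ν) ∂(Measure.map X P) := by
    intro Φ hΦ
    rw [← lintegral_map hΦ (hX.prodMk hU'), hpair, lintegral_prod _ hΦ.aemeasurable]
  -- the key pointwise (in x) swap identity
  have key : ∀ x : Fin N → S,
      ∫⁻ u, (∏ j, (if u (φ j) ≤ p (x (φ j)) then (1 : ℝ≥0∞) else 0))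
          * (∏ j, ENNReal.ofReal (1 - p (x (φ j))))
          * G x (fun i => decide (u i ≤ p (x i))) ∂(Measure.pi ν)
        = ∫⁻ u, (∏ j, (if u (φ j) ≤ p (x (φ j)) then (0 : ℝ≥0∞) else 1))
          * (∏ j, ENNReal.ofReal (p (x (φ j))))
          * G x (fun i => decide (u i ≤ p (x i))) ∂(Measure.pi ν) := by
    intro x
    set s : Finset (Fin N) := Finset.univ.image φ with hsdef
    have hmems : ∀ i, i ∈ s ↔ i ∈ Set.range φ := by
      intro i; simp [hsdef, Set.mem_range]
    -- the modified mark vector, constant on the range of φ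
    set b' : (Fin N → ℝ) → Fin N → Bool :=
      fun u i => if i ∈ s then false else decide (u i ≤ p (x i)) with hb'def
    have hb'inv : ∀ (u : Fin N → ℝ) (i : Fin N) (t : ℝ), i ∈ s →
        b' (Function.update u i t) = b' u := by
      intro u i t hi; funext k
      by_cases hk : k ∈ s
      · simp [hb'def, hk]
      · have hki : k ≠ i := fun h => hk (h ▸ hi)
        simp [hb'def, hk, Function.update_of_ne hki]
    have hb'm : Measurable b' := by
      rw [measurable_pi_iff]; intro k
      by_cases hk : k ∈ s
      · simp only [hb'def, hk, if_true]; exact measurable_const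
      · simp only [hb'def, hk, if_false]
        have h : (fun u : Fin N → ℝ => decide (u k ≤ p (x k)))
            = fun u => if u k ≤ p (x k) then true else false := by
          funext u; by_cases h : u k ≤ p (x k) <;> simp [h]
        rw [h]
        exact Measurable.ite (measurableSet_le (measurable_pi_apply k) measurable_const)
          measurable_const measurable_const
    have hGx : Measurable (G x) := hG.comp (measurable_const.prodMk measurable_id)
    have hGeq : ∀ u : Fin N → ℝ,
        G x (fun i => decide (u i ≤ p (x i))) = G x (b' u) := by
      intro u
      refine hGins x _ _ fun j hj => ?_
      have hjs : j ∉ s := fun h => hj ((hmems j).1 h)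
      simp [hb'def, hjs]
    have hprods : ∀ (F : Fin N → ℝ≥0∞), ∏ i ∈ s, F i = ∏ j, F (φ j) := fun F => by
      rw [hsdef, Finset.prod_image (fun a _ b _ h => φ.injective h)]
    -- integrals of the single-coordinate factors
    have hIL : ∀ i : Fin N,
        ∫⁻ t, (if t ≤ p (x i) then (1 : ℝ≥0∞) else 0) ∂ν i = ENNReal.ofReal (p (x i)) := by
      intro i
      have h1 : (fun t : ℝ => if t ≤ p (x i) then (1 : ℝ≥0∞) else 0)
          = (Set.Iic (p (x i))).indicator 1 := by
        funext t; simp [Set.indicator_apply, Set.mem_Iic]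
      rw [h1, lintegral_indicator_one measurableSet_Iic]
      simp only [hν]
      rw [Measure.restrict_apply measurableSet_Iic]
      have h2 : Set.Iic (p (x i)) ∩ Set.Icc (0 : ℝ) 1 = Set.Icc 0 (p (x i)) := by
        obtain ⟨h0, h1'⟩ := hp01 (x i)
        ext t
        simp only [Set.mem_inter_iff, Set.mem_Iic, Set.mem_Icc]
        exact ⟨fun ⟨ht, h0t, _⟩ => ⟨h0t, ht⟩, fun ⟨h0t, ht⟩ => ⟨ht, h0t, ht.trans h1'⟩⟩
      rw [h2, Real.volume_Icc, sub_zero]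
    have hIR : ∀ i : Fin N,
        ∫⁻ t, (if t ≤ p (x i) then (0 : ℝ≥0∞) else 1) ∂ν i
          = ENNReal.ofReal (1 - p (x i)) := by
      intro i
      have h1 : (fun t : ℝ => if t ≤ p (x i) then (0 : ℝ≥0∞) else 1)
          = (Set.Ioi (p (x i))).indicator 1 := by
        funext t
        by_cases h : t ≤ p (x i)
        · simp [Set.indicator_apply, Set.mem_Ioi, h, not_lt.2 h]
        · simp [Set.indicator_apply, Set.mem_Ioi, h, lt_of_not_ge h]
      rw [h1, lintegral_indicator_one measurableSet_Ioi]
      simp only [hν]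
      rw [Measure.restrict_apply measurableSet_Ioi]
      have h2 : Set.Ioi (p (x i)) ∩ Set.Icc (0 : ℝ) 1 = Set.Ioc (p (x i)) 1 := by
        obtain ⟨h0, h1'⟩ := hp01 (x i)
        ext t
        simp only [Set.mem_inter_iff, Set.mem_Ioi, Set.mem_Icc, Set.mem_Ioc]
        exact ⟨fun ⟨ht, _, ht1⟩ => ⟨ht, ht1⟩, fun ⟨ht, ht1⟩ => ⟨ht, h0.trans ht.le, ht1⟩⟩
      rw [h2, Real.volume_Ioc]
    -- rewrite both integrands in the split form and apply the swap lemma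
    have hEqL : ∀ u : Fin N → ℝ,
        (∏ j, (if u (φ j) ≤ p (x (φ j)) then (1 : ℝ≥0∞) else 0))
            * (∏ j, ENNReal.ofReal (1 - p (x (φ j))))
            * G x (fun i => decide (u i ≤ p (x i)))
          = (∏ i ∈ s, (fun t : ℝ => if t ≤ p (x i) then (1 : ℝ≥0∞) else 0) (u i))
            * ((∏ j, ENNReal.ofReal (1 - p (x (φ j)))) * G x (b' u)) := by
      intro u
      rw [hGeq u, hprods (fun i => (fun t : ℝ => if t ≤ p (x i) then (1 : ℝ≥0∞) else 0) (u i))]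
      ring
    have hEqR : ∀ u : Fin N → ℝ,
        (∏ j, (if u (φ j) ≤ p (x (φ j)) then (0 : ℝ≥0∞) else 1))
            * (∏ j, ENNReal.ofReal (p (x (φ j))))
            * G x (fun i => decide (u i ≤ p (x i)))
          = (∏ i ∈ s, (fun t : ℝ => if t ≤ p (x i) then (0 : ℝ≥0∞) else 1) (u i))
            * ((∏ j, ENNReal.ofReal (p (x (φ j)))) * G x (b' u)) := by
      intro u
      rw [hGeq u, hprods (fun i => (fun t : ℝ => if t ≤ p (x i) then (0 : ℝ≥0∞) else 1) (u i))]
      ring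
    rw [lintegral_congr hEqL, lintegral_congr hEqR]
    refine inner_swap_aux ν s _ _
      (fun i => Measurable.ite measurableSet_Iic measurable_const measurable_const)
      (fun i => Measurable.ite measurableSet_Iic measurable_const measurable_const)
      (fun u => G x (b' u)) (hGx.comp hb'm)
      (fun u i t hi => by rw [hb'inv u i t hi]) _ _ ?_
    have e1 : ∏ i ∈ s, ∫⁻ t, (if t ≤ p (x i) then (1 : ℝ≥0∞) else 0) ∂ν i
        = ∏ j, ENNReal.ofReal (p (x (φ j))) := by
      rw [Finset.prod_congr rfl fun i _ => hIL i, hprods (fun i => ENNReal.ofReal (p (x i)))]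
    have e2 : ∏ i ∈ s, ∫⁻ t, (if t ≤ p (x i) then (0 : ℝ≥0∞) else 1) ∂ν i
        = ∏ j, ENNReal.ofReal (1 - p (x (φ j))) := by
      rw [Finset.prod_congr rfl fun i _ => hIR i, hprods (fun i => ENNReal.ofReal (1 - p (x i)))]
    rw [e1, e2]; ring
  -- put everything together
  calc ∫⁻ ω, (∏ j, (if U (φ j) ω ≤ p (X ω (φ j)) then (1 : ℝ≥0∞) else 0))
        * (∏ j, ENNReal.ofReal (1 - p (X ω (φ j))))
        * G (X ω) (fun i => decide (U i ω ≤ p (X ω i))) ∂P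
      = ∫⁻ x, ∫⁻ u, (∏ j, (if u (φ j) ≤ p (x (φ j)) then (1 : ℝ≥0∞) else 0))
          * (∏ j, ENNReal.ofReal (1 - p (x (φ j))))
          * G x (fun i => decide (u i ≤ p (x i))) ∂(Measure.pi ν) ∂(Measure.map X P) :=
        hred _ hΦL
    _ = ∫⁻ x, ∫⁻ u, (∏ j, (if u (φ j) ≤ p (x (φ j)) then (0 : ℝ≥0∞) else 1))
          * (∏ j, ENNReal.ofReal (p (x (φ j))))
          * G x (fun i => decide (u i ≤ p (x i))) ∂(Measure.pi ν) ∂(Measure.map X P) :=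
        lintegral_congr key
    _ = _ := (hred _ hΦR).symm
end

section
/- Second moment of a sum over distinct tuples of an i.i.d. sample: let X_1,…,X_N be i.i.d. S-valued random elements with distribution f·μ, let n ≥ 1 with 2n ≤ N, and let h : Sⁿ → [0,∞] be measurable and symmetric (invariant under permutation of its n arguments). Then E[ ( Σ_φ h(X_{φ(1)},…,X_{φ(n)}) )² ] = Σ_{j=0}^{n} j! · C(n,j)² · (N!/(N−(2n−j))!) · ∫_{S^{2n−j}} h(u_1,…,u_n) · h(u_1,…,u_j, u_{n+1},…,u_{2n−j}) · ∏_{i=1}^{2n−j} f(u_i) dμ^{2n−j}, where the sum over φ ranges over injective maps φ : {1,…,n} → {1,…,N} and C(n,j) denotes the binomial coefficient. -/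
open MeasureTheory ProbabilityTheory ENNReal

/-- Inclusion `Fin n → Fin (2n − j)` onto the first `n` coordinates (valid when `j ≤ n`),
used to express `h(u_1,…,u_n)` as a function of `(u_1,…,u_{2n−j})`. -/
def firstTupleIdx {n j : ℕ} (hj : j ≤ n) (i : Fin n) : Fin (2 * n - j) :=
  ⟨i, by have := i.isLt; omega⟩

/-- The index map `Fin n → Fin (2n − j)` sending `(1,…,n)` to `(1,…,j,n+1,…,2n−j)`
(0-based: `i ↦ i` for `i < j` and `i ↦ n + i − j` otherwise), used to express
`h(u_1,…,u_j,u_{n+1},…,u_{2n−j})` as a function of `(u_1,…,u_{2n−j})`. -/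
def overlapTupleIdx {n j : ℕ} (hj : j ≤ n) (i : Fin n) : Fin (2 * n - j) :=
  if h : (i : ℕ) < j then ⟨i, by have := i.isLt; omega⟩
  else ⟨n + i - j, by have := i.isLt; omega⟩

private lemma aux_descFactorial_add (N a b : ℕ) :
    N.descFactorial (a + b) = N.descFactorial a * (N - a).descFactorial b := by
  induction b with
  | zero => simp
  | succ b ih =>
    rw [← Nat.add_assoc, Nat.descFactorial_succ, Nat.descFactorial_succ, ih,
      Nat.sub_sub, mul_left_comm]

private lemma aux_factorial_div {N k : ℕ} (hk : k ≤ N) :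
    (Nat.factorial N : ℝ≥0∞) / (Nat.factorial (N - k) : ℝ≥0∞)
      = (N.descFactorial k : ℝ≥0∞) := by
  have h1 : N.descFactorial k * (N - k).factorial = N.factorial := by
    rw [Nat.descFactorial_eq_div hk]
    exact Nat.div_mul_cancel (Nat.factorial_dvd_factorial (Nat.sub_le _ _))
  rw [← h1]
  push_cast
  rw [mul_div_assoc, ENNReal.div_self (by exact_mod_cast (Nat.factorial_pos _).ne')
    (ENNReal.natCast_ne_top _), mul_one]

private lemma aux_lintegral_pi_prod {S : Type*} [MeasurableSpace S] (μ : Measure S)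
    [SigmaFinite μ] : ∀ (m : ℕ) (g : Fin m → S → ℝ≥0∞), (∀ i, Measurable (g i)) →
    ∫⁻ u, ∏ i, g i (u i) ∂(Measure.pi fun _ : Fin m => μ) = ∏ i, ∫⁻ x, g i x ∂μ := by
  intro m
  induction m with
  | zero =>
    intro g hg
    simp [lintegral_const, Measure.pi_univ]
  | succ m ih =>
    intro g hg
    have hmp := measurePreserving_piFinSuccAbove (fun _ : Fin (m+1) => μ) 0
    set e := MeasurableEquiv.piFinSuccAbove (fun _ : Fin (m+1) => S) 0 with he
    set F : S × (Fin m → S) → ℝ≥0∞ := fun p => g 0 p.1 * ∏ i : Fin m, g i.succ (p.2 i) with hF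
    have hFmeas : Measurable F :=
      Measurable.mul ((hg 0).comp measurable_fst)
        (Finset.measurable_prod _ fun i _ => (hg i.succ).comp
          ((measurable_pi_apply i).comp measurable_snd))
    have hpt : ∀ u : Fin (m+1) → S, F (e u) = ∏ i, g i (u i) := by
      intro u
      have h2 : ∀ i : Fin m, (e u).2 i = u i.succ := by
        intro i
        show u (Fin.succAbove 0 i) = u i.succ
        rw [Fin.succAbove_zero]
      rw [hF, Fin.prod_univ_succ]
      exact congrArg₂ _ rfl (Finset.prod_congr rfl fun i _ => by rw [h2])
    calc ∫⁻ u, ∏ i, g i (u i) ∂(Measure.pi fun _ : Fin (m+1) => μ)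
        = ∫⁻ u, F (e u) ∂(Measure.pi fun _ : Fin (m+1) => μ) :=
          lintegral_congr fun u => (hpt u).symm
      _ = ∫⁻ p, F p ∂(μ.prod (Measure.pi fun _ : Fin m => μ)) := hmp.lintegral_comp hFmeas
      _ = (∫⁻ x, g 0 x ∂μ) * ∫⁻ v : Fin m → S, ∏ i : Fin m, g i.succ (v i)
            ∂(Measure.pi fun _ : Fin m => μ) :=
          lintegral_prod_mul (f := g 0)
            (g := fun v : Fin m → S => ∏ i : Fin m, g i.succ (v i)) ((hg 0).aemeasurable)
            ((Finset.measurable_prod _ fun i _ => (hg i.succ).comp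
              (measurable_pi_apply i)).aemeasurable)
      _ = (∫⁻ x, g 0 x ∂μ) * ∏ i : Fin m, ∫⁻ x, g i.succ x ∂μ := by
          rw [ih _ (fun i => hg i.succ)]
      _ = ∏ i, ∫⁻ x, g i x ∂μ := (Fin.prod_univ_succ (fun i => ∫⁻ x, g i x ∂μ)).symm

private lemma aux_pi_withDensity {S : Type*} [MeasurableSpace S] (μ : Measure S)
    [SigmaFinite μ] (f : S → ℝ≥0∞) (hf : Measurable f) (hf1 : ∫⁻ u, f u ∂μ = 1) (m : ℕ) :
    Measure.pi (fun _ : Fin m => μ.withDensity f)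
      = (Measure.pi fun _ : Fin m => μ).withDensity (fun u => ∏ i, f (u i)) := by
  haveI : IsProbabilityMeasure (μ.withDensity f) :=
    ⟨by rw [withDensity_apply _ MeasurableSet.univ, setLIntegral_univ, hf1]⟩
  refine Measure.pi_eq fun s hs => ?_
  rw [withDensity_apply _ (MeasurableSet.univ_pi hs),
    ← lintegral_indicator (MeasurableSet.univ_pi hs)]
  have key : ∀ u : Fin m → S,
      (Set.univ.pi s).indicator (fun u : Fin m → S => ∏ i, f (u i)) u
        = ∏ i, (s i).indicator f (u i) := by
    intro u
    by_cases hu : u ∈ Set.univ.pi s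
    · rw [Set.indicator_of_mem hu]
      exact Finset.prod_congr rfl fun i _ =>
        (Set.indicator_of_mem (hu i (Set.mem_univ i)) f).symm
    · rw [Set.indicator_of_notMem hu]
      rw [Set.mem_univ_pi] at hu
      push_neg at hu
      obtain ⟨i, hi⟩ := hu
      exact (Finset.prod_eq_zero (Finset.mem_univ i) (Set.indicator_of_notMem hi f)).symm
  simp_rw [key]
  rw [aux_lintegral_pi_prod μ m _ (fun i => hf.indicator (hs i))]
  exact Finset.prod_congr rfl fun i _ => by
    rw [lintegral_indicator (hs i), withDensity_apply _ (hs i)]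

private lemma aux_joint_law {Ω S : Type*} [MeasurableSpace Ω] [MeasurableSpace S]
    {P : Measure Ω} [IsProbabilityMeasure P] {N : ℕ} {X : Fin N → Ω → S}
    (hX : ∀ i, Measurable (X i)) {ν : Measure S} [SigmaFinite ν]
    (hlaw : ∀ i, Measure.map (X i) P = ν)
    (hindep : iIndepFun X P)
    {m : ℕ} (hm : m ≠ 0) (θ : Fin m ↪ Fin N) :
    Measure.map (fun ω => fun i : Fin m => X (θ i) ω) P
      = Measure.pi (fun _ : Fin m => ν) := by
  classical
  haveI : Nonempty (Fin m) := ⟨⟨0, Nat.pos_of_ne_zero hm⟩⟩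
  have hmeas : Measurable (fun ω => fun i : Fin m => X (θ i) ω) :=
    measurable_pi_lambda _ fun i => hX _
  refine (Measure.pi_eq fun s hs => ?_).symm
  rw [Measure.map_apply hmeas (MeasurableSet.univ_pi hs)]
  set inv : Fin N → Fin m := Function.invFun θ with hinv
  have hinvθ : ∀ i : Fin m, inv (θ i) = i :=
    Function.leftInverse_invFun θ.injective
  have hpre : (fun ω => fun i : Fin m => X (θ i) ω) ⁻¹' Set.univ.pi s
      = ⋂ k ∈ Finset.image θ Finset.univ, X k ⁻¹' s (inv k) := by
    ext ω
    simp only [Set.mem_preimage, Set.mem_univ_pi, Set.mem_iInter, Finset.mem_image,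
      Finset.mem_univ, true_and]
    constructor
    · rintro hω k ⟨i, rfl⟩
      rw [hinvθ i]; exact hω i
    · intro hω i
      have := hω (θ i) ⟨i, rfl⟩
      rwa [hinvθ i] at this
  rw [hpre, hindep.measure_inter_preimage_eq_mul (Finset.image θ Finset.univ)
    (sets := fun k => s (inv k)) (fun k _ => hs (inv k))]
  rw [Finset.prod_image (fun a _ b _ hab => θ.injective hab)]
  refine Finset.prod_congr rfl fun i _ => ?_
  rw [hinvθ i, ← hlaw (θ i), Measure.map_apply (hX (θ i)) (hs i)]

private lemma aux_lintegral_emb {Ω S : Type*} [MeasurableSpace Ω] [MeasurableSpace S]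
    {P : Measure Ω} [IsProbabilityMeasure P] {N : ℕ} {X : Fin N → Ω → S}
    (hX : ∀ i, Measurable (X i)) {ν : Measure S} [SigmaFinite ν]
    (hlaw : ∀ i, Measure.map (X i) P = ν)
    (hindep : iIndepFun X P)
    {m : ℕ} (hm : m ≠ 0) (θ : Fin m ↪ Fin N)
    (g : (Fin m → S) → ℝ≥0∞) (hg : Measurable g) :
    ∫⁻ ω, g (fun i => X (θ i) ω) ∂P = ∫⁻ u, g u ∂(Measure.pi fun _ : Fin m => ν) := by
  rw [← aux_joint_law hX hlaw hindep hm θ,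
    lintegral_map hg (measurable_pi_lambda _ fun i => hX _)]

private def auxEmbSplit {n N : ℕ} (A : Finset (Fin N)) (K : Finset (Fin n))
    [DecidablePred (· ∈ K)] :
    {ψ : Fin n ↪ Fin N // ∀ i, ψ i ∈ A ↔ i ∈ K} ≃
      (({i // i ∈ K} ↪ {x // x ∈ A}) × ({i // i ∉ K} ↪ {x // x ∉ A})) where
  toFun ψ :=
    (⟨fun i => ⟨ψ.1 i.1, (ψ.2 i.1).mpr i.2⟩,
       fun a b hab => Subtype.ext (ψ.1.injective (congrArg Subtype.val hab))⟩,
     ⟨fun i => ⟨ψ.1 i.1, fun hmem => i.2 ((ψ.2 i.1).mp hmem)⟩,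
       fun a b hab => Subtype.ext (ψ.1.injective (congrArg Subtype.val hab))⟩)
  invFun g :=
    ⟨⟨fun i => if hi : i ∈ K then (g.1 ⟨i, hi⟩).1 else (g.2 ⟨i, hi⟩).1, by
        intro a b hab
        dsimp only at hab
        split_ifs at hab with ha hb hb
        · exact congrArg Subtype.val (g.1.injective (Subtype.ext hab))
        · exact absurd (hab ▸ (g.1 ⟨a, ha⟩).2) (g.2 ⟨b, hb⟩).2
        · exact absurd (hab ▸ (g.2 ⟨a, ha⟩).2 : _) (not_not_intro (g.1 ⟨b, hb⟩).2)
        · exact congrArg Subtype.val (g.2.injective (Subtype.ext hab))⟩, by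
      intro i
      show (if hi : i ∈ K then (g.1 ⟨i, hi⟩).1 else (g.2 ⟨i, hi⟩).1) ∈ A ↔ i ∈ K
      split_ifs with hi
      · exact iff_of_true (g.1 ⟨i, hi⟩).2 hi
      · exact iff_of_false (g.2 ⟨i, hi⟩).2 hi⟩
  left_inv ψ := by
    refine Subtype.ext (DFunLike.ext _ _ fun i => ?_)
    dsimp only [Function.Embedding.coeFn_mk]
    show (if hi : i ∈ K then ψ.1 i else ψ.1 i) = ψ.1 i
    split_ifs <;> rfl
  right_inv g := by
    refine Prod.ext (DFunLike.ext _ _ fun i => Subtype.ext ?_) (DFunLike.ext _ _ fun i => Subtype.ext ?_)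
    · show (if hi : i.1 ∈ K then (g.1 ⟨i.1, hi⟩).1 else (g.2 ⟨i.1, hi⟩).1) = (g.1 i).1
      rw [dif_pos i.2]
    · show (if hi : i.1 ∈ K then (g.1 ⟨i.1, hi⟩).1 else (g.2 ⟨i.1, hi⟩).1) = (g.2 i).1
      rw [dif_neg i.2]

private lemma aux_count_fiber {N n j : ℕ} (A : Finset (Fin N)) (hA : A.card = n)
    (K : Finset (Fin n)) (hK : K.card = j) :
    (Finset.univ.filter fun ψ : Fin n ↪ Fin N =>
        Finset.univ.filter (fun i => ψ i ∈ A) = K).card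
      = n.descFactorial j * (N - n).descFactorial (n - j) := by
  classical
  rw [← Fintype.card_subtype]
  have E0 : {ψ : Fin n ↪ Fin N // Finset.univ.filter (fun i => ψ i ∈ A) = K}
      ≃ {ψ : Fin n ↪ Fin N // ∀ i, ψ i ∈ A ↔ i ∈ K} :=
    Equiv.subtypeEquivRight fun ψ => by simp [Finset.ext_iff]
  rw [Fintype.card_congr (E0.trans (auxEmbSplit A K)), Fintype.card_prod,
    Fintype.card_embedding_eq, Fintype.card_embedding_eq]
  have c1 : Fintype.card {i // i ∈ K} = j := by rw [Fintype.card_coe, hK]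
  have c2 : Fintype.card {x // x ∈ A} = n := by rw [Fintype.card_coe, hA]
  have c3 : Fintype.card {i : Fin n // i ∉ K} = n - j := by
    rw [Fintype.card_subtype_compl, Fintype.card_fin, Fintype.card_coe, hK]
  have c4 : Fintype.card {x : Fin N // x ∉ A} = N - n := by
    rw [Fintype.card_subtype_compl, Fintype.card_fin, Fintype.card_coe, hA]
  rw [c1, c2, c3, c4]

private lemma aux_count {N n j : ℕ} (A : Finset (Fin N)) (hA : A.card = n) :
    (Finset.univ.filter fun ψ : Fin n ↪ Fin N =>
        (Finset.univ.filter fun i => ψ i ∈ A).card = j).card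
      = n.choose j * (n.descFactorial j * (N - n).descFactorial (n - j)) := by
  classical
  rw [Finset.card_eq_sum_card_fiberwise
    (f := fun ψ : Fin n ↪ Fin N => Finset.univ.filter (fun i => ψ i ∈ A))
    (t := Finset.powersetCard j (Finset.univ : Finset (Fin n)))
    (fun ψ hψ => Finset.mem_powersetCard.mpr
      ⟨Finset.subset_univ _, (Finset.mem_filter.mp hψ).2⟩)]
  have step : ∀ K ∈ Finset.powersetCard j (Finset.univ : Finset (Fin n)),
      ((Finset.univ.filter fun ψ : Fin n ↪ Fin N =>
          (Finset.univ.filter fun i => ψ i ∈ A).card = j).filter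
        (fun ψ => Finset.univ.filter (fun i => ψ i ∈ A) = K)).card
      = n.descFactorial j * (N - n).descFactorial (n - j) := by
    intro K hKmem
    have hK : K.card = j := (Finset.mem_powersetCard.mp hKmem).2
    rw [Finset.filter_filter]
    rw [Finset.filter_congr (q := fun ψ : Fin n ↪ Fin N =>
        Finset.univ.filter (fun i => ψ i ∈ A) = K)
      (fun ψ _ => ⟨fun h => h.2, fun h => ⟨by rw [h, hK], h⟩⟩)]
    exact aux_count_fiber A hA K hK
  rw [Finset.sum_congr rfl step, Finset.sum_const, Finset.card_powersetCard,
    Finset.card_univ, Fintype.card_fin, smul_eq_mul]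

private lemma aux_subtypeCongr_left {α : Type*} {p q : α → Prop} [DecidablePred p]
    [DecidablePred q] (e : {x // p x} ≃ {x // q x}) (f : {x // ¬p x} ≃ {x // ¬q x})
    {a : α} (h : p a) : Equiv.subtypeCongr e f a = (e ⟨a, h⟩ : {x // q x}) := by
  simp [Equiv.subtypeCongr, h]

private lemma aux_subtypeCongr_right {α : Type*} {p q : α → Prop} [DecidablePred p]
    [DecidablePred q] (e : {x // p x} ≃ {x // q x}) (f : {x // ¬p x} ≃ {x // ¬q x})
    {a : α} (h : ¬ p a) : Equiv.subtypeCongr e f a = (f ⟨a, h⟩ : {x // ¬q x}) := by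
  simp [Equiv.subtypeCongr, h]

private lemma aux_pair {Ω S : Type*} [MeasurableSpace Ω] [MeasurableSpace S]
    {P : Measure Ω} [IsProbabilityMeasure P] {N n : ℕ} (hn : 1 ≤ n)
    {X : Fin N → Ω → S} (hX : ∀ i, Measurable (X i)) {ν : Measure S} [SigmaFinite ν]
    (hlaw : ∀ i, Measure.map (X i) P = ν)
    (hindep : iIndepFun X P)
    {h : (Fin n → S) → ℝ≥0∞} (hh : Measurable h)
    (hsym : ∀ (σ : Equiv.Perm (Fin n)) (u : Fin n → S), h (u ∘ σ) = h u)
    (φ ψ : Fin n ↪ Fin N) {j : ℕ} (hj : j ≤ n)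
    (hjcard : (Finset.univ.filter fun i => ψ i ∈ Finset.image φ Finset.univ).card = j) :
    ∫⁻ ω, h (fun i => X (φ i) ω) * h (fun i => X (ψ i) ω) ∂P
      = ∫⁻ u : Fin (2 * n - j) → S,
          h (fun i => u (firstTupleIdx hj i)) * h (fun i => u (overlapTupleIdx hj i))
          ∂(Measure.pi fun _ : Fin (2 * n - j) => ν) := by
  classical
  set A : Finset (Fin N) := Finset.image φ Finset.univ with hAdef
  set B : Finset (Fin N) := Finset.image ψ Finset.univ with hBdef
  set K : Finset (Fin n) := Finset.univ.filter (fun i => ψ i ∈ A) with hKdef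
  set L : Finset (Fin n) := Finset.univ.filter (fun i => φ i ∈ B) with hLdef
  have hK : K.card = j := hjcard
  have hmemK : ∀ i : Fin n, i ∈ K ↔ ψ i ∈ A := fun i =>
    ⟨fun hi => (Finset.mem_filter.mp hi).2,
     fun hi => Finset.mem_filter.mpr ⟨Finset.mem_univ _, hi⟩⟩
  have hmemL : ∀ i : Fin n, i ∈ L ↔ φ i ∈ B := fun i =>
    ⟨fun hi => (Finset.mem_filter.mp hi).2,
     fun hi => Finset.mem_filter.mpr ⟨Finset.mem_univ _, hi⟩⟩
  have hφinA : ∀ i : Fin n, φ i ∈ A := fun i =>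
    Finset.mem_image.mpr ⟨i, Finset.mem_univ _, rfl⟩
  have hψinB : ∀ i : Fin n, ψ i ∈ B := fun i =>
    Finset.mem_image.mpr ⟨i, Finset.mem_univ _, rfl⟩
  have himgK : Finset.image (⇑ψ) K = B ∩ A := by
    ext x
    constructor
    · intro hx
      obtain ⟨i, hiK, rfl⟩ := Finset.mem_image.mp hx
      exact Finset.mem_inter.mpr ⟨hψinB i, (hmemK i).mp hiK⟩
    · intro hx
      obtain ⟨hxB, hxA⟩ := Finset.mem_inter.mp hx
      obtain ⟨i, -, rfl⟩ := Finset.mem_image.mp hxB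
      exact Finset.mem_image.mpr ⟨i, (hmemK i).mpr hxA, rfl⟩
  have himgL : Finset.image (⇑φ) L = A ∩ B := by
    ext x
    constructor
    · intro hx
      obtain ⟨i, hiL, rfl⟩ := Finset.mem_image.mp hx
      exact Finset.mem_inter.mpr ⟨hφinA i, (hmemL i).mp hiL⟩
    · intro hx
      obtain ⟨hxA, hxB⟩ := Finset.mem_inter.mp hx
      obtain ⟨i, -, rfl⟩ := Finset.mem_image.mp hxA
      exact Finset.mem_image.mpr ⟨i, (hmemL i).mpr hxB, rfl⟩
  have hL : L.card = j := by
    have h1 : K.card = (B ∩ A).card := by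
      rw [← himgK, Finset.card_image_of_injective _ ψ.injective]
    have h2 : L.card = (A ∩ B).card := by
      rw [← himgL, Finset.card_image_of_injective _ φ.injective]
    rw [h2, Finset.inter_comm, ← h1, hK]
  have eP : {i : Fin n // (i : ℕ) < j} ≃ Fin j :=
    ⟨fun x => ⟨x.1.1, x.2⟩, fun y => ⟨⟨y.1, lt_of_lt_of_le y.2 hj⟩, y.2⟩,
      fun x => Subtype.ext (Fin.ext rfl), fun y => rfl⟩
  have cP : Fintype.card {i : Fin n // (i : ℕ) < j} = j := by
    rw [Fintype.card_congr eP, Fintype.card_fin]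
  have cL : Fintype.card {i : Fin n // i ∈ L} = j := by rw [Fintype.card_coe, hL]
  have cK : Fintype.card {i : Fin n // i ∈ K} = j := by rw [Fintype.card_coe, hK]
  have cPc : Fintype.card {i : Fin n // ¬ (i : ℕ) < j} = n - j := by
    rw [Fintype.card_subtype_compl, Fintype.card_fin, cP]
  have cLc : Fintype.card {i : Fin n // ¬ i ∈ L} = n - j := by
    rw [Fintype.card_subtype_compl, Fintype.card_fin, cL]
  have cKc : Fintype.card {i : Fin n // ¬ i ∈ K} = n - j := by
    rw [Fintype.card_subtype_compl, Fintype.card_fin, cK]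
  set eH : {i : Fin n // (i : ℕ) < j} ≃ {i : Fin n // i ∈ L} :=
    Fintype.equivOfCardEq (cP.trans cL.symm) with heH
  set eHc : {i : Fin n // ¬ (i : ℕ) < j} ≃ {i : Fin n // ¬ i ∈ L} :=
    Fintype.equivOfCardEq (cPc.trans cLc.symm) with heHc
  set σ : Equiv.Perm (Fin n) := Equiv.subtypeCongr eH eHc with hσdef
  have hE2mem : ∀ i : {i : Fin n // i ∈ L}, φ i.1 ∈ A ∩ B :=
    fun i => Finset.mem_inter.mpr ⟨hφinA i.1, (hmemL i.1).mp i.2⟩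
  have hE2bij : Function.Bijective
      (fun i : {i : Fin n // i ∈ L} => (⟨φ i.1, hE2mem i⟩ : {x : Fin N // x ∈ A ∩ B})) := by
    constructor
    · exact fun a b hab => Subtype.ext (φ.injective (congrArg Subtype.val hab))
    · rintro ⟨x, hx⟩
      obtain ⟨hxA, hxB⟩ := Finset.mem_inter.mp hx
      obtain ⟨i, -, hi⟩ := Finset.mem_image.mp hxA
      exact ⟨⟨i, (hmemL i).mpr (hi ▸ hxB)⟩, Subtype.ext hi⟩
  set E2 : {i : Fin n // i ∈ L} ≃ {x : Fin N // x ∈ A ∩ B} :=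
    Equiv.ofBijective _ hE2bij with hE2def
  have hE3mem : ∀ i : {i : Fin n // i ∈ K}, ψ i.1 ∈ A ∩ B :=
    fun i => Finset.mem_inter.mpr ⟨(hmemK i.1).mp i.2, hψinB i.1⟩
  have hE3bij : Function.Bijective
      (fun i : {i : Fin n // i ∈ K} => (⟨ψ i.1, hE3mem i⟩ : {x : Fin N // x ∈ A ∩ B})) := by
    constructor
    · exact fun a b hab => Subtype.ext (ψ.injective (congrArg Subtype.val hab))
    · rintro ⟨x, hx⟩
      obtain ⟨hxA, hxB⟩ := Finset.mem_inter.mp hx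
      obtain ⟨i, -, hi⟩ := Finset.mem_image.mp hxB
      exact ⟨⟨i, (hmemK i).mpr (hi ▸ hxA)⟩, Subtype.ext hi⟩
  set E3 : {i : Fin n // i ∈ K} ≃ {x : Fin N // x ∈ A ∩ B} :=
    Equiv.ofBijective _ hE3bij with hE3def
  set tH : {i : Fin n // (i : ℕ) < j} ≃ {i : Fin n // i ∈ K} :=
    (eH.trans E2).trans E3.symm with htH
  set tHc : {i : Fin n // ¬ (i : ℕ) < j} ≃ {i : Fin n // ¬ i ∈ K} :=
    Fintype.equivOfCardEq (cPc.trans cKc.symm) with htHc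
  set τ : Equiv.Perm (Fin n) := Equiv.subtypeCongr tH tHc with hτdef
  have hσval : ∀ (i : Fin n) (hi : (i : ℕ) < j), σ i = (eH ⟨i, hi⟩).1 := fun i hi => by
    rw [hσdef, aux_subtypeCongr_left eH eHc hi]
  have hτval : ∀ (i : Fin n) (hi : (i : ℕ) < j), τ i = (tH ⟨i, hi⟩).1 := fun i hi => by
    rw [hτdef, aux_subtypeCongr_left tH tHc hi]
  have hτnotK : ∀ (i : Fin n), ¬ (i : ℕ) < j → τ i ∉ K := fun i hi => by
    rw [hτdef, aux_subtypeCongr_right tH tHc hi]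
    exact (tHc ⟨i, hi⟩).2
  have hτψφ : ∀ (i : Fin n) (hi : (i : ℕ) < j), ψ (τ i) = φ (σ i) := by
    intro i hi
    rw [hτval i hi, hσval i hi]
    have e3 : ∀ x, (E3 x).1 = ψ x.1 := fun x => by rw [hE3def, Equiv.ofBijective_apply]
    have e2 : ∀ x, (E2 x).1 = φ x.1 := fun x => by rw [hE2def, Equiv.ofBijective_apply]
    have key : E3 (tH ⟨i, hi⟩) = E2 (eH ⟨i, hi⟩) := by
      rw [htH]
      simp only [Equiv.trans_apply]
      exact E3.apply_symm_apply _
    rw [← e3, key, e2]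
  have hψnotA : ∀ (i : Fin n), ¬ (i : ℕ) < j → ψ (τ i) ∉ A := by
    intro i hi hmem
    exact hτnotK i hi ((hmemK _).mpr hmem)
  have hm : 2 * n - j ≠ 0 := by omega
  set θf : Fin (2 * n - j) → Fin N := fun t =>
    if ht : (t : ℕ) < n then φ (σ ⟨t, ht⟩)
    else ψ (τ ⟨(t : ℕ) - n + j, by have := t.isLt; omega⟩) with hθf
  have hθinj : Function.Injective θf := by
    intro t₁ t₂ heq
    simp only [hθf] at heq
    by_cases h1 : (t₁ : ℕ) < n <;> by_cases h2 : (t₂ : ℕ) < n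
    · rw [dif_pos h1, dif_pos h2] at heq
      have := σ.injective (φ.injective heq)
      exact Fin.ext (congrArg Fin.val this : _)
    · rw [dif_pos h1, dif_neg h2] at heq
      refine absurd (heq ▸ hφinA (σ ⟨t₁, h1⟩)) (hψnotA _ ?_)
      show ¬ ((t₂ : ℕ) - n + j < j)
      have := t₂.isLt; omega
    · rw [dif_neg h1, dif_pos h2] at heq
      refine absurd (heq.symm ▸ hφinA (σ ⟨t₂, h2⟩)) (hψnotA _ ?_)
      show ¬ ((t₁ : ℕ) - n + j < j)
      have := t₁.isLt; omega
    · rw [dif_neg h1, dif_neg h2] at heq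
      have := τ.injective (ψ.injective heq)
      have hval : (t₁ : ℕ) - n + j = (t₂ : ℕ) - n + j := congrArg Fin.val this
      have l1 := t₁.isLt; have l2 := t₂.isLt
      exact Fin.ext (by omega)
  set θ : Fin (2 * n - j) ↪ Fin N := ⟨θf, hθinj⟩ with hθdef
  have hfirst : ∀ i : Fin n, θf (firstTupleIdx hj i) = φ (σ i) := by
    intro i
    show (if ht : ((firstTupleIdx hj i : Fin (2 * n - j)) : ℕ) < n
        then φ (σ ⟨(firstTupleIdx hj i : Fin (2 * n - j)), ht⟩)
        else _) = φ (σ i)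
    rw [dif_pos (show ((firstTupleIdx hj i : Fin (2 * n - j)) : ℕ) < n from i.isLt)]
    exact congrArg _ (congrArg _ (Fin.ext rfl))
  have hover : ∀ i : Fin n, θf (overlapTupleIdx hj i) = ψ (τ i) := by
    intro i
    by_cases hi : (i : ℕ) < j
    · rw [overlapTupleIdx, dif_pos hi]
      show (if ht : ((⟨(i : ℕ), _⟩ : Fin (2 * n - j)) : ℕ) < n
          then φ (σ ⟨_, ht⟩) else _) = ψ (τ i)
      rw [dif_pos (show ((⟨(i : ℕ), _⟩ : Fin (2 * n - j)) : ℕ) < n from i.isLt)]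
      rw [show (⟨((⟨(i : ℕ), _⟩ : Fin (2 * n - j)) : ℕ), i.isLt⟩ : Fin n) = i from Fin.ext rfl]
      exact (hτψφ i hi).symm
    · rw [overlapTupleIdx, dif_neg hi]
      show (if ht : ((⟨n + (i : ℕ) - j, _⟩ : Fin (2 * n - j)) : ℕ) < n
          then φ (σ ⟨_, ht⟩)
          else ψ (τ ⟨n + (i : ℕ) - j - n + j, _⟩)) = ψ (τ i)
      rw [dif_neg (show ¬ ((⟨n + (i : ℕ) - j, _⟩ : Fin (2 * n - j)) : ℕ) < n by
        show ¬ (n + (i : ℕ) - j < n); omega)]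
      exact congrArg _ (congrArg _ (Fin.ext (by show n + (i : ℕ) - j - n + j = (i : ℕ); omega)))
  set G : (Fin (2 * n - j) → S) → ℝ≥0∞ := fun u =>
    h (fun i => u (firstTupleIdx hj i)) * h (fun i => u (overlapTupleIdx hj i)) with hGdef
  have hGmeas : Measurable G :=
    (hh.comp (measurable_pi_lambda _ fun i => measurable_pi_apply _)).mul
      (hh.comp (measurable_pi_lambda _ fun i => measurable_pi_apply _))
  have hpt : ∀ ω, G (fun t => X (θ t) ω)
      = h (fun i => X (φ i) ω) * h (fun i => X (ψ i) ω) := by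
    intro ω
    have h1 : (fun i => X (θ (firstTupleIdx hj i)) ω) = (fun i => X (φ i) ω) ∘ σ := by
      funext i
      exact congrArg (fun k => X k ω) (hfirst i)
    have h2 : (fun i => X (θ (overlapTupleIdx hj i)) ω) = (fun i => X (ψ i) ω) ∘ τ := by
      funext i
      exact congrArg (fun k => X k ω) (hover i)
    show h (fun i => X (θ (firstTupleIdx hj i)) ω) * h (fun i => X (θ (overlapTupleIdx hj i)) ω)
      = h (fun i => X (φ i) ω) * h (fun i => X (ψ i) ω)
    rw [h1, h2, hsym σ, hsym τ]
  calc ∫⁻ ω, h (fun i => X (φ i) ω) * h (fun i => X (ψ i) ω) ∂P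
      = ∫⁻ ω, G (fun t => X (θ t) ω) ∂P := lintegral_congr fun ω => (hpt ω).symm
    _ = ∫⁻ u, G u ∂(Measure.pi fun _ : Fin (2 * n - j) => ν) :=
        aux_lintegral_emb hX hlaw hindep hm θ G hGmeas

/-- Second moment of a sum over distinct tuples of an i.i.d. sample: with
`X 1,…,X N` i.i.d. with distribution `f·μ`, `n ≥ 1`, `2n ≤ N` and `h : Sⁿ → [0,∞]`
measurable and symmetric,
`E[(∑_φ h(X_{φ 1},…,X_{φ n}))²]
  = ∑_{j=0}^{n} j!·C(n,j)²·(N!/(N−(2n−j))!) ∫ h(u_1,…,u_n) h(u_1,…,u_j,u_{n+1},…,u_{2n−j})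
      ∏ f(uᵢ) dμ^{2n−j}`,
the sum over `φ` ranging over injective maps `φ : Fin n ↪ Fin N`. -/
theorem second_moment_sum_distinct_tuples_iid {Ω S : Type*} [MeasurableSpace Ω]
    [MeasurableSpace S] (P : Measure Ω) [IsProbabilityMeasure P]
    (μ : Measure S) [SigmaFinite μ]
    (f : S → ℝ≥0∞) (hf : Measurable f) (hf1 : ∫⁻ u, f u ∂μ = 1)
    (N n : ℕ) (hn : 1 ≤ n) (h2nN : 2 * n ≤ N)
    (X : Fin N → Ω → S) (hX : ∀ i, Measurable (X i))
    (hlaw : ∀ i, Measure.map (X i) P = μ.withDensity f)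
    (hindep : iIndepFun X P)
    (h : (Fin n → S) → ℝ≥0∞) (hh : Measurable h)
    (hsym : ∀ (σ : Equiv.Perm (Fin n)) (u : Fin n → S), h (u ∘ σ) = h u) :
    ∫⁻ ω, (∑ φ : Fin n ↪ Fin N, h (fun j => X (φ j) ω)) ^ 2 ∂P
      = ∑ j : Fin (n + 1),
          (Nat.factorial j : ℝ≥0∞) * (Nat.choose n j : ℝ≥0∞) ^ 2
            * ((Nat.factorial N : ℝ≥0∞)
                / (Nat.factorial (N - (2 * n - (j : ℕ))) : ℝ≥0∞))
            * ∫⁻ u : Fin (2 * n - (j : ℕ)) → S,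
                h (fun i => u (firstTupleIdx (Nat.lt_succ_iff.mp j.isLt) i))
                  * h (fun i => u (overlapTupleIdx (Nat.lt_succ_iff.mp j.isLt) i))
                  * ∏ i, f (u i)
                ∂(Measure.pi fun _ : Fin (2 * n - (j : ℕ)) => μ) := by
  classical
  set ν : Measure S := μ.withDensity f with hνdef
  haveI hνprob : IsProbabilityMeasure ν :=
    ⟨by rw [hνdef, withDensity_apply _ MeasurableSet.univ, setLIntegral_univ, hf1]⟩
  set I : Fin (n + 1) → ℝ≥0∞ := fun j =>
    ∫⁻ u : Fin (2 * n - (j : ℕ)) → S,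
      h (fun i => u (firstTupleIdx (Nat.lt_succ_iff.mp j.isLt) i))
        * h (fun i => u (overlapTupleIdx (Nat.lt_succ_iff.mp j.isLt) i))
      ∂(Measure.pi fun _ : Fin (2 * n - (j : ℕ)) => ν) with hIdef
  have hocard_lt : ∀ p : (Fin n ↪ Fin N) × (Fin n ↪ Fin N),
      (Finset.univ.filter fun i => p.2 i ∈ Finset.image p.1 Finset.univ).card < n + 1 := by
    intro p
    exact Nat.lt_succ_iff.mpr ((Finset.card_filter_le _ _).trans
      (by rw [Finset.card_univ, Fintype.card_fin]))
  set ocard : (Fin n ↪ Fin N) × (Fin n ↪ Fin N) → Fin (n + 1) := fun p =>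
    ⟨(Finset.univ.filter fun i => p.2 i ∈ Finset.image p.1 Finset.univ).card,
      hocard_lt p⟩ with hocard
  -- expand the square
  have expand : ∀ ω : Ω, (∑ φ : Fin n ↪ Fin N, h fun j => X (φ j) ω) ^ 2
      = ∑ p : (Fin n ↪ Fin N) × (Fin n ↪ Fin N),
          h (fun i => X (p.1 i) ω) * h (fun i => X (p.2 i) ω) := by
    intro ω
    rw [sq, Finset.sum_mul_sum, Fintype.sum_prod_type]
  have hterm : ∀ p : (Fin n ↪ Fin N) × (Fin n ↪ Fin N), Measurable fun ω =>
      h (fun i => X (p.1 i) ω) * h (fun i => X (p.2 i) ω) := fun p =>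
    (hh.comp (measurable_pi_lambda _ fun i => hX _)).mul
      (hh.comp (measurable_pi_lambda _ fun i => hX _))
  have step1 : ∫⁻ ω, (∑ φ : Fin n ↪ Fin N, h fun j => X (φ j) ω) ^ 2 ∂P
      = ∑ p : (Fin n ↪ Fin N) × (Fin n ↪ Fin N),
          ∫⁻ ω, h (fun i => X (p.1 i) ω) * h (fun i => X (p.2 i) ω) ∂P := by
    rw [lintegral_congr expand, lintegral_finset_sum _ (fun p _ => hterm p)]
  -- each pair integral
  have hpair : ∀ p : (Fin n ↪ Fin N) × (Fin n ↪ Fin N),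
      ∫⁻ ω, h (fun i => X (p.1 i) ω) * h (fun i => X (p.2 i) ω) ∂P = I (ocard p) := by
    intro p
    exact aux_pair hn hX hlaw hindep hh hsym p.1 p.2
      (Nat.lt_succ_iff.mp (ocard p).isLt) rfl
  -- fiberwise sum
  have step2 : ∑ p : (Fin n ↪ Fin N) × (Fin n ↪ Fin N), I (ocard p)
      = ∑ j : Fin (n + 1),
          ((Finset.univ.filter fun p : (Fin n ↪ Fin N) × (Fin n ↪ Fin N) =>
            ocard p = j).card : ℝ≥0∞) * I j := by
    rw [← Finset.sum_fiberwise Finset.univ ocard (fun p => I (ocard p))]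
    refine Finset.sum_congr rfl fun j _ => ?_
    rw [Finset.sum_congr rfl (fun p hp => by rw [(Finset.mem_filter.mp hp).2]),
      Finset.sum_const, nsmul_eq_mul]
  -- counting
  have hcount : ∀ j : Fin (n + 1),
      (Finset.univ.filter fun p : (Fin n ↪ Fin N) × (Fin n ↪ Fin N) =>
        ocard p = j).card
      = N.descFactorial n
          * (n.choose j * (n.descFactorial j * (N - n).descFactorial (n - j))) := by
    intro j
    rw [Finset.card_filter, Fintype.sum_prod_type]
    have inner : ∀ φ : Fin n ↪ Fin N,
        (∑ ψ : Fin n ↪ Fin N, if ocard (φ, ψ) = j then 1 else 0)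
        = n.choose j * (n.descFactorial j * (N - n).descFactorial (n - j)) := by
      intro φ
      rw [← Finset.card_filter]
      have hA : (Finset.image φ Finset.univ).card = n := by
        rw [Finset.card_image_of_injective _ φ.injective, Finset.card_univ, Fintype.card_fin]
      rw [← aux_count (j := (j : ℕ)) (Finset.image φ Finset.univ) hA]
      apply congrArg Finset.card
      apply Finset.filter_congr
      intro ψ _
      constructor
      · intro he
        exact congrArg Fin.val he
      · intro hc
        exact Fin.ext hc
    rw [Finset.sum_congr rfl (fun φ _ => inner φ), Finset.sum_const, smul_eq_mul,
      Finset.card_univ, Fintype.card_embedding_eq, Fintype.card_fin, Fintype.card_fin]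
  -- numeric identity and density conversion per j
  have final : ∀ j : Fin (n + 1),
      ((N.descFactorial n
          * (n.choose j * (n.descFactorial j * (N - n).descFactorial (n - j))) : ℕ) : ℝ≥0∞)
          * I j
      = (Nat.factorial j : ℝ≥0∞) * (Nat.choose n j : ℝ≥0∞) ^ 2
          * ((Nat.factorial N : ℝ≥0∞) / (Nat.factorial (N - (2 * n - (j : ℕ))) : ℝ≥0∞))
          * ∫⁻ u : Fin (2 * n - (j : ℕ)) → S,
              h (fun i => u (firstTupleIdx (Nat.lt_succ_iff.mp j.isLt) i))
                * h (fun i => u (overlapTupleIdx (Nat.lt_succ_iff.mp j.isLt) i))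
                * ∏ i, f (u i)
              ∂(Measure.pi fun _ : Fin (2 * n - (j : ℕ)) => μ) := by
    intro j
    have hjn : (j : ℕ) ≤ n := Nat.lt_succ_iff.mp j.isLt
    -- coefficient identity in ℕ
    have hcoeff : N.descFactorial n
        * (n.choose j * (n.descFactorial j * (N - n).descFactorial (n - j)))
        = Nat.factorial j * n.choose j ^ 2 * N.descFactorial (2 * n - (j : ℕ)) := by
      rw [show 2 * n - (j : ℕ) = n + (n - (j : ℕ)) by omega, aux_descFactorial_add,
        Nat.descFactorial_eq_factorial_mul_choose n (j : ℕ)]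
      ring
    -- density conversion
    have hGmeas : Measurable fun u : Fin (2 * n - (j : ℕ)) → S =>
        h (fun i => u (firstTupleIdx (Nat.lt_succ_iff.mp j.isLt) i))
          * h (fun i => u (overlapTupleIdx (Nat.lt_succ_iff.mp j.isLt) i)) :=
      (hh.comp (measurable_pi_lambda _ fun i => measurable_pi_apply _)).mul
        (hh.comp (measurable_pi_lambda _ fun i => measurable_pi_apply _))
    have hdens : Measurable fun u : Fin (2 * n - (j : ℕ)) → S => ∏ i, f (u i) :=
      Finset.measurable_prod _ fun i _ => hf.comp (measurable_pi_apply i)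
    have hIconv : I j = ∫⁻ u : Fin (2 * n - (j : ℕ)) → S,
        h (fun i => u (firstTupleIdx (Nat.lt_succ_iff.mp j.isLt) i))
          * h (fun i => u (overlapTupleIdx (Nat.lt_succ_iff.mp j.isLt) i))
          * ∏ i, f (u i)
        ∂(Measure.pi fun _ : Fin (2 * n - (j : ℕ)) => μ) := by
      rw [hIdef]
      show (∫⁻ u : Fin (2 * n - (j : ℕ)) → S, _ ∂(Measure.pi fun _ => μ.withDensity f)) = _
      rw [aux_pi_withDensity μ f hf hf1,
        lintegral_withDensity_eq_lintegral_mul _ hdens hGmeas]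
      exact lintegral_congr fun u => by dsimp only [Pi.mul_apply]; ring
    calc ((N.descFactorial n
          * (n.choose j * (n.descFactorial j * (N - n).descFactorial (n - j))) : ℕ) : ℝ≥0∞)
          * I j
        = ((Nat.factorial j * n.choose j ^ 2 * N.descFactorial (2 * n - (j : ℕ)) : ℕ) : ℝ≥0∞)
            * I j := by rw [hcoeff]
      _ = _ := by
          push_cast
          rw [← aux_factorial_div (show 2 * n - (j : ℕ) ≤ N by omega), hIconv]
  calc ∫⁻ ω, (∑ φ : Fin n ↪ Fin N, h fun j => X (φ j) ω) ^ 2 ∂P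
      = ∑ p : (Fin n ↪ Fin N) × (Fin n ↪ Fin N),
          ∫⁻ ω, h (fun i => X (p.1 i) ω) * h (fun i => X (p.2 i) ω) ∂P := step1
    _ = ∑ p : (Fin n ↪ Fin N) × (Fin n ↪ Fin N), I (ocard p) :=
        Finset.sum_congr rfl fun p _ => hpair p
    _ = ∑ j : Fin (n + 1),
          ((Finset.univ.filter fun p : (Fin n ↪ Fin N) × (Fin n ↪ Fin N) =>
            ocard p = j).card : ℝ≥0∞) * I j := step2
    _ = _ := Finset.sum_congr rfl fun j _ => by rw [hcount j, final j]
end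

section
/- Limiting admissible hard-core ranges under repeated Monte-Carlo cross-validation: let (S, d) be a metric space, let 𝐱 ⊆ S be finite with #𝐱 ≥ 2, and let R̄ := min{ d(x, y) : x, y ∈ 𝐱, x ≠ y }. Let p ∈ (0,1) and let (ε_{i,x})_{i∈ℕ, x∈𝐱} be independent {0,1}-valued random variables with P(ε_{i,x} = 1) = p; set 𝐱_i^V := {x ∈ 𝐱 : ε_{i,x} = 1} and 𝐱_i^T := 𝐱 ∖ 𝐱_i^V. Then almost surely ⋂_{i∈ℕ} { r > 0 : d(v, t) > r for all v ∈ 𝐱_i^V and t ∈ 𝐱_i^T } = { r : 0 < r < R̄ }. -/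
open MeasureTheory ProbabilityTheory

/-- Limiting admissible hard-core ranges under repeated Monte-Carlo
cross-validation: with `xs` a finite set of at least two points of a metric space,
`R̄` the minimal distance between distinct points of `xs`, and independent `p`-thinning
marks `ε (i, x)` (validation set `{x : ε (i,x) = true}`, training set its complement),
almost surely
`⋂_i {r > 0 : d(v,t) > r for all v in the i-th validation set and t in the i-th training
set} = (0, R̄)`. -/
theorem mccv_hardcore_admissible_ranges {Ω S : Type*} [MeasurableSpace Ω]
    [MetricSpace S] (P : Measure Ω) [IsProbabilityMeasure P]
    (xs : Finset S) (hxs : 2 ≤ xs.card) (Rbar : ℝ)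
    (hRbar : IsLeast {d : ℝ | ∃ x ∈ xs, ∃ y ∈ xs, x ≠ y ∧ d = dist x y} Rbar)
    (p : ℝ) (hp : p ∈ Set.Ioo (0 : ℝ) 1)
    (ε : ℕ × xs → Ω → Bool) (hmeas : ∀ q, Measurable (ε q))
    (hindep : iIndepFun ε P)
    (hprob : ∀ q, P {ω | ε q ω = true} = ENNReal.ofReal p) :
    ∀ᵐ ω ∂P,
      (⋂ i : ℕ, {r : ℝ | 0 < r ∧ ∀ v : xs, ∀ t : xs,
          ε (i, v) ω = true → ε (i, t) ω = false → r < dist (v : S) (t : S)})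
        = {r : ℝ | 0 < r ∧ r < Rbar} := by
  classical
  -- extract a pair of distinct points realizing Rbar
  obtain ⟨x, hx, y, hy, hxy, hRxy⟩ := hRbar.1
  set a : xs := ⟨x, hx⟩
  set b : xs := ⟨y, hy⟩
  have hab : a ≠ b := fun h => hxy (congrArg Subtype.val h)
  -- probability of a single coordinate being false
  have hfalse : ∀ q, P {ω | ε q ω = false} = 1 - ENNReal.ofReal p := by
    intro q
    have h1 : {ω | ε q ω = false} = {ω | ε q ω = true}ᶜ := by
      ext ω
      simp only [Set.mem_compl_iff, Set.mem_setOf_eq, Bool.not_eq_true]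
    have hm : MeasurableSet {ω | ε q ω = true} := hmeas q (measurableSet_singleton true)
    rw [h1, prob_compl_eq_one_sub hm, hprob q]
  set β : ENNReal := ENNReal.ofReal p * (1 - ENNReal.ofReal p) with hβ
  have hβne : β ≠ 0 := by
    have h1 : ENNReal.ofReal p ≠ 0 := (ENNReal.ofReal_pos.mpr hp.1).ne'
    have h2 : (1 : ENNReal) - ENNReal.ofReal p ≠ 0 := by
      intro h
      exact absurd (tsub_eq_zero_iff_le.mp h) (not_le.mpr (ENNReal.ofReal_lt_one.mpr hp.2))
    exact mul_ne_zero h1 h2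
  -- probability of the "good" event at round i
  have hBset : ∀ i : ℕ,
      P ({ω | ε (i, a) ω = true} ∩ {ω | ε (i, b) ω = false}) = β := by
    intro i
    have hne : ((i, a) : ℕ × xs) ≠ (i, b) := by
      intro h; exact hab (congrArg Prod.snd h)
    have hIF : IndepFun (ε (i, a)) (ε (i, b)) P := hindep.indepFun hne
    have := hIF.measure_inter_preimage_eq_mul {true} {false}
      (measurableSet_singleton true) (measurableSet_singleton false)
    have h1 : ε (i, a) ⁻¹' {true} = {ω | ε (i, a) ω = true} := rfl
    have h2 : ε (i, b) ⁻¹' {false} = {ω | ε (i, b) ω = false} := rfl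
    rw [h1, h2] at this
    rw [this, hprob, hfalse]
  set c : ENNReal := 1 - β with hc
  have hclt : c < 1 := ENNReal.sub_lt_self ENNReal.one_ne_top one_ne_zero hβne
  -- the sets A n
  set A : ℕ → Set Ω := fun n =>
    {ω | ∀ i, i < n → ¬(ε (i, a) ω = true ∧ ε (i, b) ω = false)} with hA
  have hAn : ∀ n, P (A n) = c ^ n := by
    intro n
    induction n with
    | zero =>
      have : A 0 = Set.univ := by
        ext ω; simp [hA]
      rw [this]; simp
    | succ n ih =>
      set Sf : Finset (ℕ × xs) := Finset.range n ×ˢ (Finset.univ : Finset xs) with hSf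
      set Tf : Finset (ℕ × xs) := {n} ×ˢ (Finset.univ : Finset xs) with hTf
      have hST : Disjoint Sf Tf := by
        rw [Finset.disjoint_left]
        rintro ⟨i, v⟩ hS hT
        have h1 : i < n := (Finset.mem_product.mp hS).1 |> Finset.mem_range.mp
        have h2 : i = n := by
          have := (Finset.mem_product.mp hT).1
          simpa using this
        omega
      have hIF : IndepFun (fun ω (q : Sf) => ε q ω) (fun ω (q : Tf) => ε q ω) P :=
        hindep.indepFun_finset Sf Tf hST hmeas
      -- express A n and the new constraint as preimages
      have memS : ∀ i, i < n → ∀ v : xs, ((i, v) : ℕ × xs) ∈ Sf := by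
        intro i hi v
        exact Finset.mem_product.mpr ⟨Finset.mem_range.mpr hi, Finset.mem_univ v⟩
      have memT : ∀ v : xs, ((n, v) : ℕ × xs) ∈ Tf := by
        intro v
        exact Finset.mem_product.mpr ⟨Finset.mem_singleton_self n, Finset.mem_univ v⟩
      set sA : Set ((q : Sf) → Bool) :=
        {g | ∀ i, ∀ h : i < n,
          ¬(g ⟨(i, a), memS i h a⟩ = true ∧ g ⟨(i, b), memS i h b⟩ = false)} with hsA
      set sD : Set ((q : Tf) → Bool) :=
        {g | ¬(g ⟨(n, a), memT a⟩ = true ∧ g ⟨(n, b), memT b⟩ = false)} with hsD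
      have hpreA : (fun ω (q : Sf) => ε q ω) ⁻¹' sA = A n := by
        ext ω; simp [hsA, hA]
      have hpreD : (fun ω (q : Tf) => ε q ω) ⁻¹' sD =
          {ω | ¬(ε (n, a) ω = true ∧ ε (n, b) ω = false)} := by
        ext ω; simp [hsD]
      have hsplit : A (n + 1) = A n ∩ {ω | ¬(ε (n, a) ω = true ∧ ε (n, b) ω = false)} := by
        ext ω
        simp only [hA, Set.mem_inter_iff, Set.mem_setOf_eq]
        constructor
        · intro h
          exact ⟨fun i hi => h i (by omega), h n (by omega)⟩
        · rintro ⟨h1, h2⟩ i hi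
          rcases Nat.lt_succ_iff_lt_or_eq.mp hi with h | h
          · exact h1 i h
          · subst h; exact h2
      have hmA : MeasurableSet sA := (Set.toFinite sA).measurableSet
      have hmD : MeasurableSet sD := (Set.toFinite sD).measurableSet
      have hmul := hIF.measure_inter_preimage_eq_mul sA sD hmA hmD
      rw [hpreA, hpreD] at hmul
      have hPD : P {ω | ¬(ε (n, a) ω = true ∧ ε (n, b) ω = false)} = c := by
        have h1 : {ω | ¬(ε (n, a) ω = true ∧ ε (n, b) ω = false)} =
            ({ω | ε (n, a) ω = true} ∩ {ω | ε (n, b) ω = false})ᶜ := by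
          ext ω; simp
        have hmB : MeasurableSet ({ω | ε (n, a) ω = true} ∩ {ω | ε (n, b) ω = false}) := by
          exact ((hmeas (n, a)) (measurableSet_singleton true)).inter
            ((hmeas (n, b)) (measurableSet_singleton false))
        rw [h1, prob_compl_eq_one_sub hmB, hBset n]
      rw [hsplit, hmul, ih, hPD, pow_succ]
  -- the bad event has probability zero
  set N : Set Ω := {ω | ∀ i : ℕ, ¬(ε (i, a) ω = true ∧ ε (i, b) ω = false)} with hN
  have hNle : ∀ n, P N ≤ c ^ n := by
    intro n
    rw [← hAn n]
    apply measure_mono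
    intro ω hω i _
    exact hω i
  have hN0 : P N = 0 := by
    have htend := ENNReal.tendsto_pow_atTop_nhds_zero_of_lt_one hclt
    exact le_antisymm (ge_of_tendsto' htend hNle) zero_le
  -- conclude
  have hae : ∀ᵐ ω ∂P, ω ∉ N := measure_eq_zero_iff_ae_notMem.mp hN0
  filter_upwards [hae] with ω hω
  have hwit : ∃ i : ℕ, ε (i, a) ω = true ∧ ε (i, b) ω = false := by
    by_contra h
    exact hω (fun i hi => h ⟨i, hi⟩)
  obtain ⟨i₀, hi₀a, hi₀b⟩ := hwit
  ext r
  simp only [Set.mem_iInter, Set.mem_setOf_eq]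
  constructor
  · intro h
    refine ⟨(h 0).1, ?_⟩
    have := (h i₀).2 a b hi₀a hi₀b
    rwa [← hRxy] at this
  · rintro ⟨hr0, hrR⟩ i
    refine ⟨hr0, fun v t hv ht => ?_⟩
    have hvt : v ≠ t := by
      intro h; subst h; rw [hv] at ht; exact Bool.noConfusion ht
    have hdist : Rbar ≤ dist (v : S) (t : S) :=
      hRbar.2 ⟨v, v.2, t, t.2, fun h => hvt (Subtype.ext h), rfl⟩
    linarith
end
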